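/- With α = 1/2 and p₀ < 0, the function T_b(h) = (2√2/(-p₀)^{3/2})·(π/2 + arctan((-p₀h)^{-1/2})) - 2√(2h)/p₀ defined for h > 0 satisfies: (i) lim_{h→0⁺} T_b(h) = 2√2·π·(-p₀)^{-3/2}; (ii) T_b is strictly increasing on (0,∞); (iii) T_b(h) → +∞ as h → +∞. -/

import Mathlib

open Real Filter Set Topology

theorem stmt7 (p₀ : ℝ) (hp : p₀ < 0) (Tb : ℝ → ℝ)
    (hTb : ∀ h : ℝ, 0 < h → Tb h =
      2 * Real.sqrt 2 / (-p₀) ^ ((3:ℝ)/2) * (π / 2 + arctan ((-p₀ * h) ^ (-(1/2) : ℝ)))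
        - 2 * Real.sqrt (2 * h) / p₀) :
    Tendsto Tb (𝓝[>] 0) (𝓝 (2 * Real.sqrt 2 * π * (-p₀) ^ (-(3/2) : ℝ))) ∧
    StrictMonoOn Tb (Set.Ioi 0) ∧
    Tendsto Tb atTop atTop := by
  set a : ℝ := -p₀ with ha_def
  have ha : 0 < a := neg_pos.mpr hp
  have hsa : 0 < Real.sqrt a := Real.sqrt_pos.mpr ha
  set c : ℝ := 2 * Real.sqrt 2 / a ^ ((3:ℝ)/2) with hc_def
  have hapow : 0 < a ^ ((3:ℝ)/2) := Real.rpow_pos_of_pos ha _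
  have hc : 0 < c := by
    apply div_pos _ hapow
    positivity
  set F : ℝ → ℝ := fun t => 2 * Real.sqrt 2 / a * t - c * arctan (Real.sqrt a * t)
    with hF_def
  have hp0 : p₀ = -a := by rw [ha_def]; ring
  -- key rewriting
  have key : ∀ h : ℝ, 0 < h → Tb h = c * π + F (Real.sqrt h) := by
    intro h hh
    rw [hTb h hh]
    have h1 : (a * h) ^ (-(1/2) : ℝ) = (Real.sqrt a * Real.sqrt h)⁻¹ := by
      rw [Real.rpow_neg (by positivity), ← Real.sqrt_eq_rpow, Real.sqrt_mul ha.le]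
    have h2 : arctan ((Real.sqrt a * Real.sqrt h)⁻¹)
        = π / 2 - arctan (Real.sqrt a * Real.sqrt h) :=
      Real.arctan_inv_of_pos (by positivity)
    have h3 : Real.sqrt (2 * h) = Real.sqrt 2 * Real.sqrt h :=
      Real.sqrt_mul (by norm_num) h
    rw [h1, h2, h3, hp0, hF_def, div_neg]
    ring
  -- c * sqrt a = 2 * sqrt 2 / a
  have hcsa : c * Real.sqrt a = 2 * Real.sqrt 2 / a := by
    have h32 : a ^ ((3:ℝ)/2) = a * Real.sqrt a := by
      rw [show ((3:ℝ)/2) = 1 + 1/2 by norm_num, Real.rpow_add ha, Real.rpow_one,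
        Real.sqrt_eq_rpow]
    rw [hc_def, h32]
    field_simp
  -- derivative of F
  have hderiv : ∀ t : ℝ,
      HasDerivAt F (2 * Real.sqrt 2 / a
        - c * (Real.sqrt a / (1 + (Real.sqrt a * t) ^ 2))) t := by
    intro t
    have h1 : HasDerivAt (fun t : ℝ => Real.sqrt a * t) (Real.sqrt a) t := by
      simpa using (hasDerivAt_id t).const_mul (Real.sqrt a)
    have h2 : HasDerivAt (fun t : ℝ => arctan (Real.sqrt a * t))
        (1 / (1 + (Real.sqrt a * t) ^ 2) * Real.sqrt a) t :=
      (Real.hasDerivAt_arctan (Real.sqrt a * t)).comp t h1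
    have h3 : HasDerivAt (fun t : ℝ => 2 * Real.sqrt 2 / a * t)
        (2 * Real.sqrt 2 / a) t := by
      simpa using (hasDerivAt_id t).const_mul (2 * Real.sqrt 2 / a)
    have := h3.sub (h2.const_mul c)
    exact this.congr_deriv (by ring)
  have hFcont : Continuous F := by
    apply Continuous.sub
    · fun_prop
    · exact continuous_const.mul (Real.continuous_arctan.comp (by fun_prop))
  -- F strictly monotone on Ioi 0
  have hFmono : StrictMonoOn F (Set.Ioi 0) := by
    apply strictMonoOn_of_deriv_pos (convex_Ioi 0) hFcont.continuousOn
    intro x hx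
    rw [interior_Ioi] at hx
    rw [(hderiv x).deriv]
    have hx0 : (0:ℝ) < x := hx
    have hD : (1:ℝ) < 1 + (Real.sqrt a * x) ^ 2 := by nlinarith [sq_nonneg (Real.sqrt a * x), mul_pos hsa hx0]
    have heq : c * (Real.sqrt a / (1 + (Real.sqrt a * x) ^ 2))
        = (2 * Real.sqrt 2 / a) / (1 + (Real.sqrt a * x) ^ 2) := by
      rw [mul_div_assoc']; rw [hcsa]
    rw [heq]
    have hpos : (0:ℝ) < 2 * Real.sqrt 2 / a := by positivity
    have : (2 * Real.sqrt 2 / a) / (1 + (Real.sqrt a * x) ^ 2) < 2 * Real.sqrt 2 / a := by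
      rw [div_lt_iff₀ (by linarith)]
      nlinarith
    linarith
  refine ⟨?_, ?_, ?_⟩
  · -- limit at 0⁺
    have heq : ∀ᶠ h in 𝓝[>] (0:ℝ), c * π + F (Real.sqrt h) = Tb h :=
      eventually_nhdsWithin_of_forall (fun h hh => (key h hh).symm)
    have hF0 : F 0 = 0 := by simp [hF_def]
    have hlim : Tendsto (fun h : ℝ => c * π + F (Real.sqrt h)) (𝓝[>] 0)
        (𝓝 (c * π + F 0)) := by
      apply Tendsto.mono_left _ nhdsWithin_le_nhds
      have : Tendsto (fun h : ℝ => Real.sqrt h) (𝓝 0) (𝓝 (Real.sqrt 0)) :=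
        Real.continuous_sqrt.continuousAt
      rw [Real.sqrt_zero] at this
      exact tendsto_const_nhds.add (hFcont.continuousAt.tendsto.comp this)
    have hval : c * π + F 0 = 2 * Real.sqrt 2 * π * a ^ (-(3/2) : ℝ) := by
      rw [hF0, add_zero, hc_def]
      rw [show (-(3/2) : ℝ) = -((3:ℝ)/2) by norm_num, Real.rpow_neg ha.le]
      field_simp
    rw [← hval]
    exact hlim.congr' heq
  · -- strict monotonicity
    intro h₁ h₁m h₂ h₂m hlt
    rw [key h₁ h₁m, key h₂ h₂m]
    have hs₁ : Real.sqrt h₁ ∈ Set.Ioi (0:ℝ) := Real.sqrt_pos.mpr h₁m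
    have hs₂ : Real.sqrt h₂ ∈ Set.Ioi (0:ℝ) := Real.sqrt_pos.mpr h₂m
    have : Real.sqrt h₁ < Real.sqrt h₂ := Real.sqrt_lt_sqrt (le_of_lt h₁m) hlt
    exact add_lt_add_right (hFmono hs₁ hs₂ this) _
  · -- limit at +∞
    apply tendsto_atTop_mono' atTop
      (f₁ := fun h : ℝ => c * π - c * (π/2) + 2 * Real.sqrt 2 / a * Real.sqrt h)
    · filter_upwards [eventually_gt_atTop (0:ℝ)] with h hh
      rw [key h hh, hF_def]
      have harc : arctan (Real.sqrt a * Real.sqrt h) ≤ π / 2 :=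
        (Real.arctan_lt_pi_div_two _).le
      have : c * arctan (Real.sqrt a * Real.sqrt h) ≤ c * (π / 2) :=
        mul_le_mul_of_nonneg_left harc hc.le
      simp only
      linarith
    · apply tendsto_atTop_add_const_left
      apply Tendsto.const_mul_atTop (by positivity : (0:ℝ) < 2 * Real.sqrt 2 / a)
      simpa [funext Real.sqrt_eq_rpow] using
        tendsto_rpow_atTop (by norm_num : (0:ℝ) < 1/2)
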